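/- The tensor product of types is commutative and associative up to type equivalence: for all types x, y, z, one has x ⊗ y ≡ y ⊗ x and (x ⊗ y) ⊗ z ≡ x ⊗ (y ⊗ z), where x ⊗ y := (x → (y → I)) → I and equivalence means equality of the pairs (λ, Δ) (up to the canonical reordering of tensor factors). -/

import Mathlib

open Matrix Kronecker
open scoped ComplexOrder

/-- Types of higher-order quantum theory. The trivial type `I` is `elem 1`. -/
inductive QT where
  | elem (n : ℕ)
  | arrow (x y : QT)

/-- The index type of the Hilbert space `H_x` associated to a type `x`. -/
def Idx : QT → Type
  | .elem n => Fin n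
  | .arrow x y => Idx x × Idx y

instance idxFintype : (x : QT) → Fintype (Idx x)
  | .elem n => inferInstanceAs (Fintype (Fin n))
  | .arrow x y =>
      letI := idxFintype x; letI := idxFintype y
      inferInstanceAs (Fintype (Idx x × Idx y))

instance idxDecEq : (x : QT) → DecidableEq (Idx x)
  | .elem n => inferInstanceAs (DecidableEq (Fin n))
  | .arrow x y =>
      letI := idxDecEq x; letI := idxDecEq y
      inferInstanceAs (DecidableEq (Idx x × Idx y))

/-- Partial trace over the first tensor factor. -/
noncomputable def ptrA {ι κ : Type} [Fintype ι]
    (M : Matrix (ι × κ) (ι × κ) ℂ) : Matrix κ κ ℂ :=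
  fun k l => ∑ i : ι, M (i, k) (i, l)

/-- Deterministic events of type `x`, defined recursively: for elementary types,
positive unit-trace operators; for `x → y`, positive operators `R` such that
`Tr_x[(Sᵀ ⊗ 1) R] ∈ Det y` for every `S ∈ Det x`. -/
noncomputable def Det : (x : QT) → Set (Matrix (Idx x) (Idx x) ℂ)
  | .elem n => {R | R.PosSemidef ∧ R.trace = 1}
  | .arrow x y =>
      setOf (fun (R : Matrix (Idx x × Idx y) (Idx x × Idx y) ℂ) =>
        R.PosSemidef ∧
        ∀ S ∈ Det x, ptrA ((Sᵀ ⊗ₖ (1 : Matrix (Idx y) (Idx y) ℂ)) * R) ∈ Det y)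

/-- The real subspace of Hermitian operators. -/
noncomputable def hermSub (ι : Type) [Fintype ι] [DecidableEq ι] :
    Submodule ℝ (Matrix ι ι ℂ) where
  carrier := {X | X.IsHermitian}
  add_mem' := fun ha hb => ha.add hb
  zero_mem' := Matrix.isHermitian_zero
  smul_mem' := fun c X hX => by
    show ((c • X)ᴴ = c • X)
    rw [Matrix.conjTranspose_smul, star_trivial, hX.eq]

/-- The real subspace of traceless Hermitian operators. -/
noncomputable def tlHermSub (ι : Type) [Fintype ι] [DecidableEq ι] :
    Submodule ℝ (Matrix ι ι ℂ) where
  carrier := {X | X.IsHermitian ∧ X.trace = 0}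
  add_mem' := fun ha hb => ⟨ha.1.add hb.1, by rw [trace_add, ha.2, hb.2, add_zero]⟩
  zero_mem' := ⟨Matrix.isHermitian_zero, Matrix.trace_zero ι ℂ⟩
  smul_mem' := fun c X hX =>
    ⟨by show ((c • X)ᴴ = c • X)
        rw [Matrix.conjTranspose_smul, star_trivial, hX.1.eq],
     by rw [trace_smul, hX.2, smul_zero]⟩

/-- The Hilbert–Schmidt orthogonal complement of `S` inside `B`. -/
noncomputable def perpWithin {ι : Type} [Fintype ι] [DecidableEq ι]
    (S B : Submodule ℝ (Matrix ι ι ℂ)) : Submodule ℝ (Matrix ι ι ℂ) where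
  carrier := {Z | Z ∈ B ∧ ∀ Y ∈ S, (Y * Z).trace = 0}
  add_mem' := fun ha hb =>
    ⟨B.add_mem ha.1 hb.1, fun Y hY => by
      rw [mul_add, trace_add, ha.2 Y hY, hb.2 Y hY, add_zero]⟩
  zero_mem' := ⟨B.zero_mem, fun Y _ => by simp⟩
  smul_mem' := fun c Z hZ =>
    ⟨B.smul_mem c hZ.1, fun Y hY => by
      rw [Matrix.mul_smul, trace_smul, hZ.2 Y hY, smul_zero]⟩

/-- Tensor product of operator subspaces, spanned by Kronecker products. -/
noncomputable def tensorSub {ι κ : Type} [Fintype ι] [DecidableEq ι]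
    [Fintype κ] [DecidableEq κ]
    (P : Submodule ℝ (Matrix ι ι ℂ)) (Q : Submodule ℝ (Matrix κ κ ℂ)) :
    Submodule ℝ (Matrix (ι × κ) (ι × κ) ℂ) :=
  Submodule.span ℝ {A | ∃ X ∈ P, ∃ Y ∈ Q, A = X ⊗ₖ Y}

/-- The one-dimensional subspace `L_e` spanned by the identity. -/
noncomputable def idSub (ι : Type) [Fintype ι] [DecidableEq ι] :
    Submodule ℝ (Matrix ι ι ℂ) :=
  Submodule.span ℝ {(1 : Matrix ι ι ℂ)}

/-- The subspace `Δ_x` of traceless Hermitian operators characterizing the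
deterministic events of type `x`:
`Δ_A = Traceless(H_A)` for elementary `A`, and
`Δ_{x→y} = [Herm(H_x) ⊗ Δ_y] ⊕ [Δ̄_x ⊗ Δ_y^⊥]`, where `Δ̄_x` is the complement of
`Δ_x` inside the traceless Hermitian operators and `Δ_y^⊥` its orthogonal
complement inside the Hermitian operators. -/
noncomputable def Delta : (x : QT) → Submodule ℝ (Matrix (Idx x) (Idx x) ℂ)
  | .elem n => tlHermSub (Fin n)
  | .arrow x y =>
      (tensorSub (hermSub (Idx x)) (Delta y) ⊔
        tensorSub (perpWithin (Delta x) (tlHermSub (Idx x)))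
          (perpWithin (Delta y) (hermSub (Idx y))) :
        Submodule ℝ (Matrix (Idx x × Idx y) (Idx x × Idx y) ℂ))

/-- The normalization constant `λ_x`: `λ_A = 1/d_A`, `λ_{x→y} = λ_y/(d_x λ_x)`. -/
noncomputable def lam : QT → ℝ
  | .elem n => 1 / n
  | .arrow x y => lam y / (Fintype.card (Idx x) * lam x)

/-- The tensor product of types: `x ⊗ y := (x → (y → I)) → I`. -/
def tens (x y : QT) : QT :=
  QT.arrow (QT.arrow x (QT.arrow y (QT.elem 1))) (QT.elem 1)

/-- The canonical identification of the index set of `H_{x ⊗ y}` with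
`Idx x × Idx y`. -/
def etens (x y : QT) : Idx (tens x y) ≃ Idx x × Idx y :=
  (Equiv.prodUnique (Idx x × (Idx y × Fin 1)) (Fin 1)).trans
    (Equiv.prodCongr (Equiv.refl (Idx x)) (Equiv.prodUnique (Idx y) (Fin 1)))

/-! ### Auxiliary development -/

section Aux

open Matrix Kronecker

variable {ι κ μ ν : Type} [Fintype ι] [DecidableEq ι] [Fintype κ] [DecidableEq κ]
  [Fintype μ] [DecidableEq μ] [Fintype ν] [DecidableEq ν]

lemma mem_perpWithin {S B : Submodule ℝ (Matrix ι ι ℂ)} {Z : Matrix ι ι ℂ} :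
    Z ∈ perpWithin S B ↔ Z ∈ B ∧ ∀ Y ∈ S, (Y * Z).trace = 0 := Iff.rfl

lemma tl_le_herm : tlHermSub ι ≤ hermSub ι := fun _ h => h.1

lemma perpWithin_le {S B : Submodule ℝ (Matrix ι ι ℂ)} : perpWithin S B ≤ B := fun _ h => h.1

lemma perpWithin_bot {B : Submodule ℝ (Matrix ι ι ℂ)} :
    perpWithin (⊥ : Submodule ℝ (Matrix ι ι ℂ)) B = B := by
  ext Z
  refine ⟨fun h => h.1, fun h => ⟨h, ?_⟩⟩
  rintro Y hY
  rw [Submodule.mem_bot] at hY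
  subst hY
  simp

lemma trace_mul_real {X Y : Matrix ι ι ℂ} (hX : X.IsHermitian) (hY : Y.IsHermitian) :
    star (X * Y).trace = (X * Y).trace := by
  rw [← Matrix.trace_conjTranspose, Matrix.conjTranspose_mul, hX.eq, hY.eq,
    Matrix.trace_mul_comm]

lemma eq_zero_of_trace_mul_self {X : Matrix ι ι ℂ} (hX : X.IsHermitian)
    (h : (X * X).trace = 0) : X = 0 := by
  have h2 : (X * X).trace = ((∑ p : ι × ι, Complex.normSq (X p.1 p.2) : ℝ) : ℂ) := by
    rw [Matrix.trace, Fintype.sum_prod_type]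
    push_cast
    refine Finset.sum_congr rfl fun i _ => ?_
    rw [Matrix.diag_apply, Matrix.mul_apply]
    refine Finset.sum_congr rfl fun j _ => ?_
    rw [← hX.apply j i, Complex.star_def, Complex.mul_conj]
  have h3 : ∑ p : ι × ι, Complex.normSq (X p.1 p.2) = 0 := by
    exact_mod_cast h2.symm.trans h
  have h4 := (Finset.sum_eq_zero_iff_of_nonneg
    (fun p _ => Complex.normSq_nonneg (X p.1 p.2))).mp h3
  ext i j
  have := h4 (i, j) (Finset.mem_univ _)
  simpa using Complex.normSq_eq_zero.mp this

/-- The real trace bilinear form on matrices. -/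
noncomputable def tform (ι : Type) [Fintype ι] : LinearMap.BilinForm ℝ (Matrix ι ι ℂ) :=
  LinearMap.mk₂ ℝ (fun X Y => ((X * Y).trace).re)
    (fun X X' Y => by rw [add_mul, Matrix.trace_add, Complex.add_re])
    (fun c X Y => by
      rw [Matrix.smul_mul, Matrix.trace_smul, Complex.real_smul]
      simp [Complex.mul_re])
    (fun X Y Y' => by rw [mul_add, Matrix.trace_add, Complex.add_re])
    (fun c X Y => by
      rw [Matrix.mul_smul, Matrix.trace_smul, Complex.real_smul]
      simp [Complex.mul_re])

lemma tform_apply (X Y : Matrix ι ι ℂ) : tform ι X Y = ((X * Y).trace).re := rfl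

lemma herm_trace_eq_zero_of_re {X Y : Matrix ι ι ℂ} (hX : X.IsHermitian) (hY : Y.IsHermitian)
    (h : ((X * Y).trace).re = 0) : (X * Y).trace = 0 := by
  have him := trace_mul_real hX hY
  rw [Complex.star_def, Complex.conj_eq_iff_im] at him
  exact Complex.ext h him

lemma le_sup_perpWithin {S B : Submodule ℝ (Matrix ι ι ℂ)} (hSB : S ≤ B)
    (hB : B ≤ hermSub ι) : B ≤ S ⊔ perpWithin S B := by
  classical
  have hrefl : (tform ι).IsRefl := by
    intro X Y h
    rw [tform_apply] at h ⊢
    rwa [Matrix.trace_mul_comm]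
  have hnd : ((tform ι).restrict S).Nondegenerate := by
    refine (LinearMap.IsRefl.nondegenerate_iff_separatingLeft (B := (tform ι).restrict S)
      (fun x y h => hrefl x y h)).mpr fun m hm => ?_
    have h0 := hm m
    simp only [LinearMap.BilinForm.restrict_apply, LinearMap.domRestrict_apply, tform_apply] at h0
    have hmH : (m : Matrix ι ι ℂ).IsHermitian := hB (hSB m.2)
    exact Subtype.ext (eq_zero_of_trace_mul_self hmH (herm_trace_eq_zero_of_re hmH hmH h0))
  have hcompl := LinearMap.BilinForm.isCompl_orthogonal_of_restrict_nondegenerate hrefl hnd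
  intro Z hZ
  have hZtop : Z ∈ S ⊔ (tform ι).orthogonal S := by rw [hcompl.sup_eq_top]; trivial
  obtain ⟨s, hs, t, ht, hst⟩ := Submodule.mem_sup.mp hZtop
  have htB : t ∈ B := by
    have he : t = Z - s := by rw [← hst]; abel
    rw [he]; exact B.sub_mem hZ (hSB hs)
  refine Submodule.mem_sup.mpr ⟨s, hs, t, ⟨htB, fun Y hY => ?_⟩, hst⟩
  have h0 : tform ι Y t = 0 := ht Y hY
  rw [tform_apply] at h0
  exact herm_trace_eq_zero_of_re (hB (hSB hY)) (hB htB) h0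

lemma perpWithin_eq_of {S T B : Submodule ℝ (Matrix ι ι ℂ)} (hS : S ≤ hermSub ι)
    (hTB : T ≤ B) (hBST : B ≤ S ⊔ T)
    (horth : ∀ Y ∈ S, ∀ Z ∈ T, ((Y * Z : Matrix ι ι ℂ)).trace = 0) :
    perpWithin S B = T := by
  apply le_antisymm
  · rintro Z ⟨hZB, hZp⟩
    obtain ⟨s, hs, t, ht, hst⟩ := Submodule.mem_sup.mp (hBST hZB)
    have h1 := hZp s hs
    rw [← hst, mul_add, Matrix.trace_add, horth s hs t ht, add_zero] at h1
    have hs0 : s = 0 := eq_zero_of_trace_mul_self (hS hs) h1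
    rw [← hst, hs0, zero_add]
    exact ht
  · intro Z hZ
    exact ⟨hTB hZ, fun Y hY => horth Y hY Z hZ⟩

/-! #### `idSub` lemmas -/

lemma one_mem_idSub : (1 : Matrix ι ι ℂ) ∈ idSub ι := Submodule.mem_span_singleton_self _

lemma mem_idSub {X : Matrix ι ι ℂ} : X ∈ idSub ι ↔ ∃ c : ℝ, c • (1 : Matrix ι ι ℂ) = X :=
  Submodule.mem_span_singleton

lemma smul_one_isHermitian (c : ℝ) : (c • (1 : Matrix ι ι ℂ)).IsHermitian := by
  show _ᴴ = _
  rw [Matrix.conjTranspose_smul, star_trivial, Matrix.conjTranspose_one]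

lemma idSub_le_herm : idSub ι ≤ hermSub ι := by
  refine Submodule.span_le.mpr ?_
  rintro X hX
  rw [Set.mem_singleton_iff] at hX
  subst hX
  exact Matrix.isHermitian_one

lemma idSub_trace_eq_zero {X : Matrix ι ι ℂ} (hX : X ∈ idSub ι) (h : X.trace = 0) :
    X = 0 := by
  obtain ⟨c, rfl⟩ := mem_idSub.mp hX
  rcases eq_or_ne (Fintype.card ι) 0 with hc | hc
  · have hie : IsEmpty ι := Fintype.card_eq_zero_iff.mp hc
    ext i j; exact isEmptyElim i
  · rw [Matrix.trace_smul, Matrix.trace_one] at h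
    rcases smul_eq_zero.mp h with h | h
    · rw [h, zero_smul]
    · exact absurd (by exact_mod_cast h) hc

lemma herm_trace_im {X : Matrix ι ι ℂ} (hX : X.IsHermitian) : X.trace.im = 0 := by
  have := Matrix.trace_conjTranspose X
  rw [hX.eq] at this
  rw [← Complex.conj_eq_iff_im, ← Complex.star_def]
  exact this.symm

lemma herm_decomp' : hermSub ι = idSub ι ⊔ tlHermSub ι := by
  apply le_antisymm
  · intro Z hZ
    rcases eq_or_ne (Fintype.card ι) 0 with hc | hc
    · have hie : IsEmpty ι := Fintype.card_eq_zero_iff.mp hc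
      have hZ0 : Z = 0 := by ext i j; exact isEmptyElim i
      rw [hZ0]; exact zero_mem _
    · set c : ℝ := Z.trace.re / (Fintype.card ι) with hc'
      have h1 : c • (1 : Matrix ι ι ℂ) ∈ idSub ι := Submodule.smul_mem _ _ one_mem_idSub
      have htr : (c • (1 : Matrix ι ι ℂ)).trace = Z.trace := by
        rw [Matrix.trace_smul, Matrix.trace_one]
        have hre : Z.trace = (Z.trace.re : ℂ) := by
          apply Complex.ext
          · rfl
          · rw [herm_trace_im hZ]; simp
        rw [hre, hc', Complex.real_smul, ← Complex.ofReal_natCast, ← Complex.ofReal_mul,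
          div_mul_cancel₀ _ (Nat.cast_ne_zero.mpr hc)]
      have h2 : Z - c • 1 ∈ tlHermSub ι :=
        ⟨hZ.sub (smul_one_isHermitian c), by rw [Matrix.trace_sub, htr, sub_self]⟩
      have hZe : Z = c • 1 + (Z - c • 1) := by abel
      rw [hZe]
      exact Submodule.add_mem _ (Submodule.mem_sup_left h1) (Submodule.mem_sup_right h2)
  · exact sup_le idSub_le_herm tl_le_herm

lemma tl_unique_bot [Unique ι] : tlHermSub ι = ⊥ := by
  rw [eq_bot_iff]
  rintro X ⟨hH, htr⟩
  rw [Submodule.mem_bot]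
  have h1 : X.trace = X default default := Fintype.sum_unique _
  rw [h1] at htr
  ext i j
  rw [Unique.eq_default i, Unique.eq_default j, Matrix.zero_apply]
  exact htr

lemma herm_unique_eq [Unique ι] : hermSub ι = idSub ι := by
  rw [herm_decomp', tl_unique_bot, sup_bot_eq]

lemma tl_le_of (U : Submodule ℝ (Matrix ι ι ℂ)) (hU : U ≤ tlHermSub ι)
    (h : hermSub ι ≤ U ⊔ idSub ι) : tlHermSub ι ≤ U := by
  intro Z hZ
  obtain ⟨u, hu, w, hw, hst⟩ := Submodule.mem_sup.mp (h (tl_le_herm hZ))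
  have hwt : w.trace = 0 := by
    have h2 := hZ.2
    rw [← hst, Matrix.trace_add, (hU hu).2, zero_add] at h2
    exact h2
  rw [← hst, idSub_trace_eq_zero hw hwt, add_zero]
  exact hu

lemma efam_inf_tl {D : Submodule ℝ (Matrix ι ι ℂ)} (hD : D ≤ tlHermSub ι) :
    (idSub ι ⊔ D) ⊓ tlHermSub ι = D := by
  apply le_antisymm
  · rintro Z ⟨hZE, hZt⟩
    obtain ⟨w, hw, d, hd, hst⟩ := Submodule.mem_sup.mp hZE
    have hwt : w.trace = 0 := by
      have h2 := hZt.2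
      rw [← hst, Matrix.trace_add, (hD hd).2, add_zero] at h2
      exact h2
    rw [← hst, idSub_trace_eq_zero hw hwt, zero_add]
    exact hd
  · exact le_inf le_sup_right hD

/-! #### `tensorSub` lemmas -/

lemma mem_tensorSub {P : Submodule ℝ (Matrix ι ι ℂ)} {Q : Submodule ℝ (Matrix κ κ ℂ)}
    {A : Matrix ι ι ℂ} {B : Matrix κ κ ℂ} (hA : A ∈ P) (hB : B ∈ Q) :
    A ⊗ₖ B ∈ tensorSub P Q :=
  Submodule.subset_span ⟨A, hA, B, hB, rfl⟩

lemma tensorSub_le {P : Submodule ℝ (Matrix ι ι ℂ)} {Q : Submodule ℝ (Matrix κ κ ℂ)}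
    {R : Submodule ℝ (Matrix (ι × κ) (ι × κ) ℂ)} :
    tensorSub P Q ≤ R ↔ ∀ A ∈ P, ∀ B ∈ Q, A ⊗ₖ B ∈ R := by
  constructor
  · intro h A hA B hB; exact h (mem_tensorSub hA hB)
  · intro h
    refine Submodule.span_le.mpr ?_
    rintro _ ⟨A, hA, B, hB, rfl⟩
    exact h A hA B hB

lemma tensorSub_induction {P : Submodule ℝ (Matrix ι ι ℂ)} {Q : Submodule ℝ (Matrix κ κ ℂ)}
    {p : Matrix (ι × κ) (ι × κ) ℂ → Prop} {x : Matrix (ι × κ) (ι × κ) ℂ}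
    (hx : x ∈ tensorSub P Q)
    (mem : ∀ A ∈ P, ∀ B ∈ Q, p (A ⊗ₖ B)) (zero : p 0)
    (add : ∀ u v, p u → p v → p (u + v)) (smul : ∀ (c : ℝ) u, p u → p (c • u)) : p x := by
  refine Submodule.span_induction ?_ zero (fun u v _ _ hu hv => add u v hu hv)
    (fun c u _ hu => smul c u hu) hx
  rintro _ ⟨A, hA, B, hB, rfl⟩
  exact mem A hA B hB

lemma tensorSub_mono {P P' : Submodule ℝ (Matrix ι ι ℂ)} {Q Q' : Submodule ℝ (Matrix κ κ ℂ)}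
    (h1 : P ≤ P') (h2 : Q ≤ Q') : tensorSub P Q ≤ tensorSub P' Q' :=
  tensorSub_le.mpr fun A hA B hB => mem_tensorSub (h1 hA) (h2 hB)

lemma tensorSub_sup_left {P P' : Submodule ℝ (Matrix ι ι ℂ)} {Q : Submodule ℝ (Matrix κ κ ℂ)} :
    tensorSub (P ⊔ P') Q = tensorSub P Q ⊔ tensorSub P' Q := by
  apply le_antisymm
  · refine tensorSub_le.mpr fun A hA B hB => ?_
    obtain ⟨a, ha, a', ha', rfl⟩ := Submodule.mem_sup.mp hA
    rw [Matrix.add_kronecker]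
    exact Submodule.add_mem _ (Submodule.mem_sup_left (mem_tensorSub ha hB))
      (Submodule.mem_sup_right (mem_tensorSub ha' hB))
  · exact sup_le (tensorSub_mono le_sup_left le_rfl) (tensorSub_mono le_sup_right le_rfl)

lemma tensorSub_sup_right {P : Submodule ℝ (Matrix ι ι ℂ)} {Q Q' : Submodule ℝ (Matrix κ κ ℂ)} :
    tensorSub P (Q ⊔ Q') = tensorSub P Q ⊔ tensorSub P Q' := by
  apply le_antisymm
  · refine tensorSub_le.mpr fun A hA B hB => ?_
    obtain ⟨b, hb, b', hb', rfl⟩ := Submodule.mem_sup.mp hB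
    rw [Matrix.kronecker_add]
    exact Submodule.add_mem _ (Submodule.mem_sup_left (mem_tensorSub hA hb))
      (Submodule.mem_sup_right (mem_tensorSub hA hb'))
  · exact sup_le (tensorSub_mono le_rfl le_sup_left) (tensorSub_mono le_rfl le_sup_right)

lemma tensorSub_bot_right {P : Submodule ℝ (Matrix ι ι ℂ)} :
    tensorSub P (⊥ : Submodule ℝ (Matrix κ κ ℂ)) = ⊥ :=
  eq_bot_iff.mpr (tensorSub_le.mpr fun A _ B hB => by
    rw [Submodule.mem_bot] at hB ⊢
    rw [hB, Matrix.kronecker_zero])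

lemma kronecker_isHermitian {A : Matrix ι ι ℂ} {B : Matrix κ κ ℂ}
    (hA : A.IsHermitian) (hB : B.IsHermitian) : (A ⊗ₖ B).IsHermitian := by
  show _ = _
  ext ⟨i, j⟩ ⟨k, l⟩
  rw [Matrix.conjTranspose_apply, Matrix.kroneckerMap_apply, Matrix.kroneckerMap_apply,
    star_mul', hA.apply, hB.apply, mul_comm]

lemma tensorSub_le_herm {P : Submodule ℝ (Matrix ι ι ℂ)} {Q : Submodule ℝ (Matrix κ κ ℂ)}
    (hP : P ≤ hermSub ι) (hQ : Q ≤ hermSub κ) :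
    tensorSub P Q ≤ hermSub (ι × κ) :=
  tensorSub_le.mpr fun A hA B hB => kronecker_isHermitian (hP hA) (hQ hB)

lemma tensorSub_le_tl_left {P : Submodule ℝ (Matrix ι ι ℂ)} {Q : Submodule ℝ (Matrix κ κ ℂ)}
    (hP : P ≤ tlHermSub ι) (hQ : Q ≤ hermSub κ) :
    tensorSub P Q ≤ tlHermSub (ι × κ) :=
  tensorSub_le.mpr fun A hA B hB =>
    ⟨kronecker_isHermitian (hP hA).1 (hQ hB),
     by rw [Matrix.trace_kronecker, (hP hA).2, zero_mul]⟩

lemma tensorSub_le_tl_right {P : Submodule ℝ (Matrix ι ι ℂ)} {Q : Submodule ℝ (Matrix κ κ ℂ)}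
    (hP : P ≤ hermSub ι) (hQ : Q ≤ tlHermSub κ) :
    tensorSub P Q ≤ tlHermSub (ι × κ) :=
  tensorSub_le.mpr fun A hA B hB =>
    ⟨kronecker_isHermitian (hP hA) (hQ hB).1,
     by rw [Matrix.trace_kronecker, (hQ hB).2, mul_zero]⟩

/-- Trace-orthogonality of submodules. -/
def OrthP (P Q : Submodule ℝ (Matrix ι ι ℂ)) : Prop :=
  ∀ Y ∈ P, ∀ Z ∈ Q, ((Y * Z : Matrix ι ι ℂ)).trace = 0

lemma orthP_sup_left {P P' Q : Submodule ℝ (Matrix ι ι ℂ)} (h : OrthP P Q)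
    (h' : OrthP P' Q) : OrthP (P ⊔ P') Q := by
  intro Y hY Z hZ
  obtain ⟨a, ha, b, hb, rfl⟩ := Submodule.mem_sup.mp hY
  rw [add_mul, Matrix.trace_add, h a ha Z hZ, h' b hb Z hZ, add_zero]

lemma orthP_sup_right {P Q Q' : Submodule ℝ (Matrix ι ι ℂ)} (h : OrthP P Q)
    (h' : OrthP P Q') : OrthP P (Q ⊔ Q') := by
  intro Y hY Z hZ
  obtain ⟨a, ha, b, hb, rfl⟩ := Submodule.mem_sup.mp hZ
  rw [mul_add, Matrix.trace_add, h Y hY a ha, h' Y hY b hb, add_zero]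

lemma orthP_mono {P P' Q Q' : Submodule ℝ (Matrix ι ι ℂ)} (h1 : P' ≤ P) (h2 : Q' ≤ Q)
    (h : OrthP P Q) : OrthP P' Q' :=
  fun Y hY Z hZ => h Y (h1 hY) Z (h2 hZ)

lemma tensorSub_orth_left {P P' : Submodule ℝ (Matrix ι ι ℂ)} {Q Q' : Submodule ℝ (Matrix κ κ ℂ)}
    (h : OrthP P P') : OrthP (tensorSub P Q) (tensorSub P' Q') := by
  intro u hu
  refine tensorSub_induction
    (p := fun u => ∀ Z ∈ tensorSub P' Q', ((u * Z : Matrix ((ι × κ)) ((ι × κ)) ℂ)).trace = 0)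
    hu ?_ ?_ ?_ ?_
  · intro A hA B hB Z hZ
    refine tensorSub_induction
      (p := fun Z => ((A ⊗ₖ B * Z : Matrix ((ι × κ)) ((ι × κ)) ℂ)).trace = 0) hZ ?_ ?_ ?_ ?_
    · intro C hC D hD
      rw [← Matrix.mul_kronecker_mul, Matrix.trace_kronecker, h A hA C hC, zero_mul]
    · simp only [mul_zero, Matrix.trace_zero]
    · intro u' v' hu' hv'
      rw [mul_add, Matrix.trace_add, hu', hv', add_zero]
    · intro c u' hu'
      rw [Matrix.mul_smul, Matrix.trace_smul, hu', smul_zero]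
  · intro Z _
    rw [zero_mul, Matrix.trace_zero]
  · intro u' v' hu' hv' Z hZ
    rw [add_mul, Matrix.trace_add, hu' Z hZ, hv' Z hZ, add_zero]
  · intro c u' hu' Z hZ
    rw [Matrix.smul_mul, Matrix.trace_smul, hu' Z hZ, smul_zero]

lemma tensorSub_orth_right {P P' : Submodule ℝ (Matrix ι ι ℂ)} {Q Q' : Submodule ℝ (Matrix κ κ ℂ)}
    (h : OrthP Q Q') : OrthP (tensorSub P Q) (tensorSub P' Q') := by
  intro u hu
  refine tensorSub_induction
    (p := fun u => ∀ Z ∈ tensorSub P' Q', ((u * Z : Matrix ((ι × κ)) ((ι × κ)) ℂ)).trace = 0)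
    hu ?_ ?_ ?_ ?_
  · intro A hA B hB Z hZ
    refine tensorSub_induction
      (p := fun Z => ((A ⊗ₖ B * Z : Matrix ((ι × κ)) ((ι × κ)) ℂ)).trace = 0) hZ ?_ ?_ ?_ ?_
    · intro C hC D hD
      rw [← Matrix.mul_kronecker_mul, Matrix.trace_kronecker, h B hB D hD, mul_zero]
    · simp only [mul_zero, Matrix.trace_zero]
    · intro u' v' hu' hv'
      rw [mul_add, Matrix.trace_add, hu', hv', add_zero]
    · intro c u' hu'
      rw [Matrix.mul_smul, Matrix.trace_smul, hu', smul_zero]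
  · intro Z _
    rw [zero_mul, Matrix.trace_zero]
  · intro u' v' hu' hv' Z hZ
    rw [add_mul, Matrix.trace_add, hu' Z hZ, hv' Z hZ, add_zero]
  · intro c u' hu' Z hZ
    rw [Matrix.smul_mul, Matrix.trace_smul, hu' Z hZ, smul_zero]

lemma tensor_id : tensorSub (idSub ι) (idSub κ) = idSub (ι × κ) := by
  apply le_antisymm
  · refine tensorSub_le.mpr fun A hA B hB => ?_
    obtain ⟨a, rfl⟩ := mem_idSub.mp hA
    obtain ⟨b, rfl⟩ := mem_idSub.mp hB
    rw [Matrix.smul_kronecker, Matrix.kronecker_smul, Matrix.one_kronecker_one, smul_smul]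
    exact Submodule.smul_mem _ _ one_mem_idSub
  · refine Submodule.span_le.mpr ?_
    rintro X hX
    rw [Set.mem_singleton_iff] at hX
    subst hX
    rw [← Matrix.one_kronecker_one]
    exact mem_tensorSub one_mem_idSub one_mem_idSub

/-! #### Spanning: Hermitian matrices on a product index -/

lemma stdBasisMatrix_kron (i j : ι) (k l : κ) :
    Matrix.single (i, k) (j, l) (1 : ℂ) =
      Matrix.single i j (1 : ℂ) ⊗ₖ Matrix.single k l (1 : ℂ) := by
  ext ⟨a, b⟩ ⟨c, d⟩
  simp only [Matrix.single, Matrix.kroneckerMap_apply, Matrix.of_apply,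
    Prod.mk.injEq]
  by_cases h1 : i = a <;> by_cases h2 : j = c <;> by_cases h3 : k = b <;>
    by_cases h4 : l = d <;> simp [h1, h2, h3, h4]

lemma stdBasisMatrix_conjTranspose (i j : ι) :
    (Matrix.single i j (1 : ℂ))ᴴ = Matrix.single j i 1 := by
  ext a b
  simp only [Matrix.single, Matrix.conjTranspose_apply, Matrix.of_apply]
  by_cases h1 : i = b <;> by_cases h2 : j = a <;> simp [h1, h2]

lemma stdBasis_split (i j : ι) :
    ∃ S T : Matrix ι ι ℂ, S.IsHermitian ∧ T.IsHermitian ∧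
      Matrix.single i j (1 : ℂ) = S + Complex.I • T := by
  refine ⟨(1/2 : ℝ) • (Matrix.single i j 1 + Matrix.single j i 1),
    (1/2 : ℝ) • (Complex.I • (Matrix.single j i 1 - Matrix.single i j 1)),
    ?_, ?_, ?_⟩
  · show _ = _
    rw [Matrix.conjTranspose_smul, star_trivial, Matrix.conjTranspose_add,
      stdBasisMatrix_conjTranspose, stdBasisMatrix_conjTranspose, add_comm]
  · show _ = _
    rw [Matrix.conjTranspose_smul, star_trivial, Matrix.conjTranspose_smul,
      Matrix.conjTranspose_sub, stdBasisMatrix_conjTranspose, stdBasisMatrix_conjTranspose,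
      Complex.star_def, Complex.conj_I, neg_smul, smul_sub, smul_sub, neg_sub]
  · have hI : Complex.I • ((1/2 : ℝ) • (Complex.I •
        (Matrix.single j i 1 - Matrix.single i j (1:ℂ)))) =
        (1/2 : ℝ) • (Matrix.single i j 1 - Matrix.single j i 1) := by
      rw [smul_comm (Complex.I) ((1/2 : ℝ)), smul_smul, Complex.I_mul_I, neg_one_smul,
        neg_sub]
    rw [hI, ← smul_add]
    have : Matrix.single i j (1:ℂ) + Matrix.single j i 1 +
        (Matrix.single i j 1 - Matrix.single j i 1) =
        (2 : ℝ) • Matrix.single i j 1 := by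
      rw [two_smul]; abel
    rw [this, smul_smul]
    norm_num

lemma herm_le_tensor_herm : hermSub (ι × κ) ≤ tensorSub (hermSub ι) (hermSub κ) := by
  classical
  set V := tensorSub (hermSub ι) (hermSub κ) with hV
  let D : Submodule ℂ (Matrix (ι × κ) (ι × κ) ℂ) :=
  { carrier := {M | ∃ A ∈ V, ∃ B ∈ V, M = A + Complex.I • B}
    add_mem' := by
      rintro M N ⟨A, hA, B, hB, rfl⟩ ⟨A', hA', B', hB', rfl⟩
      exact ⟨A + A', V.add_mem hA hA', B + B', V.add_mem hB hB', by
        rw [smul_add]; abel⟩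
    zero_mem' := ⟨0, V.zero_mem, 0, V.zero_mem, by simp⟩
    smul_mem' := by
      rintro c M ⟨A, hA, B, hB, rfl⟩
      refine ⟨c.re • A - c.im • B, V.sub_mem (V.smul_mem _ hA) (V.smul_mem _ hB),
        c.re • B + c.im • A, V.add_mem (V.smul_mem _ hB) (V.smul_mem _ hA), ?_⟩
      ext p q
      simp only [Matrix.add_apply, Matrix.smul_apply, Matrix.sub_apply, smul_eq_mul,
        Complex.real_smul]
      conv_lhs => rw [← Complex.re_add_im c]
      ring_nf
      rw [Complex.I_sq]
      ring }
  have hD : ∀ M : Matrix (ι × κ) (ι × κ) ℂ, M ∈ D := by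
    intro M
    rw [Matrix.matrix_eq_sum_single M]
    apply Submodule.sum_mem
    intro p _
    apply Submodule.sum_mem
    intro q _
    have he : Matrix.single p q (M p q) = (M p q) • Matrix.single p q 1 := by
      rw [Matrix.smul_single, smul_eq_mul, mul_one]
    rw [he]
    apply Submodule.smul_mem
    obtain ⟨i, k⟩ := p
    obtain ⟨j, l⟩ := q
    show Matrix.single (i, k) (j, l) (1:ℂ) ∈ D
    rw [stdBasisMatrix_kron]
    obtain ⟨S1, T1, hS1, hT1, hE1⟩ := stdBasis_split i j
    obtain ⟨S2, T2, hS2, hT2, hE2⟩ := stdBasis_split k l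
    rw [hE1, hE2, Matrix.add_kronecker, Matrix.kronecker_add, Matrix.kronecker_add,
      Matrix.kronecker_smul, Matrix.smul_kronecker, Matrix.smul_kronecker,
      Matrix.kronecker_smul, smul_smul, Complex.I_mul_I, neg_one_smul]
    refine ⟨S1 ⊗ₖ S2 - T1 ⊗ₖ T2,
      V.sub_mem (mem_tensorSub hS1 hS2) (mem_tensorSub hT1 hT2),
      S1 ⊗ₖ T2 + T1 ⊗ₖ S2,
      V.add_mem (mem_tensorSub hS1 hT2) (mem_tensorSub hT1 hS2), ?_⟩
    rw [smul_add]
    abel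
  intro M hM
  obtain ⟨A, hA, B, hB, hMe⟩ := hD M
  have hAH : A.IsHermitian := tensorSub_le_herm le_rfl le_rfl hA
  have hBH : B.IsHermitian := tensorSub_le_herm le_rfl le_rfl hB
  have h3 : A - Complex.I • B = A + Complex.I • B := by
    have h4 := hM.eq
    rw [hMe] at h4
    conv_lhs at h4 => rw [Matrix.conjTranspose_add, Matrix.conjTranspose_smul, hAH.eq, hBH.eq,
      Complex.star_def, Complex.conj_I, neg_smul]
    rw [← h4, sub_eq_add_neg]
  have h5 : Complex.I • B = 0 := by
    rw [sub_eq_add_neg] at h3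
    have h6 := add_left_cancel h3
    have h7 := neg_eq_iff_add_eq_zero.mp h6
    rw [← two_smul ℂ] at h7
    rcases smul_eq_zero.mp h7 with h | h
    · exact absurd h two_ne_zero
    · exact h
  have hB0 : B = 0 := by
    rcases smul_eq_zero.mp h5 with h | h
    · exact absurd h Complex.I_ne_zero
    · exact h
  rw [hMe, hB0, smul_zero, add_zero]
  exact hA

/-! #### Reindexing -/

lemma trace_reindex (e : ι ≃ κ) (M : Matrix ι ι ℂ) :
    (Matrix.reindexLinearEquiv ℝ ℂ e e M).trace = M.trace := by
  rw [Matrix.reindexLinearEquiv_apply, Matrix.reindex_apply, Matrix.trace, Matrix.trace]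
  exact Fintype.sum_equiv e.symm _ _ (fun k => rfl)

lemma isHermitian_reindex {e : ι ≃ κ} {M : Matrix ι ι ℂ} (hM : M.IsHermitian) :
    (Matrix.reindexLinearEquiv ℝ ℂ e e M).IsHermitian := by
  show _ = _
  rw [Matrix.reindexLinearEquiv_apply, Matrix.reindex_apply, Matrix.conjTranspose_submatrix,
    hM.eq]

/-- Transport of operator subspaces along a relabelling of indices. -/
noncomputable def rmap (e : ι ≃ κ) (P : Submodule ℝ (Matrix ι ι ℂ)) :
    Submodule ℝ (Matrix κ κ ℂ) :=
  P.map (Matrix.reindexLinearEquiv ℝ ℂ e e).toLinearMap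

lemma mem_rmap {e : ι ≃ κ} {P : Submodule ℝ (Matrix ι ι ℂ)} {X : Matrix κ κ ℂ} :
    X ∈ rmap e P ↔ ∃ A ∈ P, Matrix.reindexLinearEquiv ℝ ℂ e e A = X := by
  exact Submodule.mem_map

lemma rmap_rmap (e : ι ≃ κ) (f : κ ≃ μ) (P : Submodule ℝ (Matrix ι ι ℂ)) :
    rmap f (rmap e P) = rmap (e.trans f) P := by
  rw [rmap, rmap, rmap, ← Submodule.map_comp]
  congr 1

lemma rmap_refl (P : Submodule ℝ (Matrix ι ι ℂ)) : rmap (Equiv.refl ι) P = P := by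
  rw [rmap, Matrix.reindexLinearEquiv_refl_refl]
  exact Submodule.map_id P

lemma rmap_cancel (e : ι ≃ κ) (P : Submodule ℝ (Matrix κ κ ℂ)) :
    rmap e (rmap e.symm P) = P := by
  rw [rmap_rmap, Equiv.symm_trans_self, rmap_refl]

lemma rmap_sup (e : ι ≃ κ) (P Q : Submodule ℝ (Matrix ι ι ℂ)) :
    rmap e (P ⊔ Q) = rmap e P ⊔ rmap e Q :=
  Submodule.map_sup _ _ _

lemma rmap_inf (e : ι ≃ κ) (P Q : Submodule ℝ (Matrix ι ι ℂ)) :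
    rmap e (P ⊓ Q) = rmap e P ⊓ rmap e Q :=
  Submodule.map_inf _ (Matrix.reindexLinearEquiv ℝ ℂ e e).injective

lemma rmap_tl (e : ι ≃ κ) : rmap e (tlHermSub ι) = tlHermSub κ := by
  apply le_antisymm
  · rintro _ ⟨M, hM, rfl⟩
    exact ⟨isHermitian_reindex hM.1, by rw [LinearEquiv.coe_coe, trace_reindex, hM.2]⟩
  · intro N hN
    refine ⟨Matrix.reindexLinearEquiv ℝ ℂ e.symm e.symm N,
      ⟨isHermitian_reindex hN.1, by rw [trace_reindex, hN.2]⟩, ?_⟩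
    show Matrix.reindexLinearEquiv ℝ ℂ e e _ = N
    rw [← Matrix.reindexLinearEquiv_symm]
    exact (Matrix.reindexLinearEquiv ℝ ℂ e e).apply_symm_apply N

lemma rmap_herm (e : ι ≃ κ) : rmap e (hermSub ι) = hermSub κ := by
  apply le_antisymm
  · rintro _ ⟨M, hM, rfl⟩
    exact isHermitian_reindex hM
  · intro N hN
    refine ⟨Matrix.reindexLinearEquiv ℝ ℂ e.symm e.symm N, isHermitian_reindex hN, ?_⟩
    show Matrix.reindexLinearEquiv ℝ ℂ e e _ = N
    rw [← Matrix.reindexLinearEquiv_symm]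
    exact (Matrix.reindexLinearEquiv ℝ ℂ e e).apply_symm_apply N

lemma rmap_idSub (e : ι ≃ κ) : rmap e (idSub ι) = idSub κ := by
  rw [rmap, idSub, idSub, Submodule.map_span]
  congr 1
  rw [Set.image_singleton]
  congr 1
  show Matrix.reindexLinearEquiv ℝ ℂ e e 1 = 1
  exact Matrix.reindexLinearEquiv_one ℝ ℂ e

lemma reindex_kron_prodCongr (e₁ : ι ≃ μ) (e₂ : κ ≃ ν) (A : Matrix ι ι ℂ)
    (B : Matrix κ κ ℂ) :
    Matrix.reindexLinearEquiv ℝ ℂ (Equiv.prodCongr e₁ e₂) (Equiv.prodCongr e₁ e₂) (A ⊗ₖ B) =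
      (Matrix.reindexLinearEquiv ℝ ℂ e₁ e₁ A) ⊗ₖ (Matrix.reindexLinearEquiv ℝ ℂ e₂ e₂ B) := by
  ext ⟨i, j⟩ ⟨k, l⟩
  rfl

lemma reindex_kron_comm (A : Matrix ι ι ℂ) (B : Matrix κ κ ℂ) :
    Matrix.reindexLinearEquiv ℝ ℂ (Equiv.prodComm ι κ) (Equiv.prodComm ι κ) (A ⊗ₖ B) =
      B ⊗ₖ A := by
  ext ⟨j, i⟩ ⟨l, k⟩
  show A i k * B j l = B j l * A i k
  exact mul_comm _ _

lemma reindex_kron_assoc (A : Matrix ι ι ℂ) (B : Matrix κ κ ℂ) (C : Matrix μ μ ℂ) :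
    Matrix.reindexLinearEquiv ℝ ℂ (Equiv.prodAssoc ι κ μ) (Equiv.prodAssoc ι κ μ)
      ((A ⊗ₖ B) ⊗ₖ C) = A ⊗ₖ (B ⊗ₖ C) := by
  rw [Matrix.reindexLinearEquiv_apply, Matrix.reindex_apply]
  exact Matrix.kronecker_assoc A B C

lemma reindex_kron_one {υ : Type} [Fintype υ] [DecidableEq υ] [Unique υ]
    (A : Matrix ι ι ℂ) :
    Matrix.reindexLinearEquiv ℝ ℂ (Equiv.prodUnique ι υ).symm (Equiv.prodUnique ι υ).symm A =
      A ⊗ₖ (1 : Matrix υ υ ℂ) := by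
  rw [Matrix.reindexLinearEquiv_apply, Matrix.reindex_apply]
  ext ⟨i, u⟩ ⟨j, u'⟩
  rw [Matrix.submatrix_apply, Matrix.kroneckerMap_apply, Subsingleton.elim u' u,
    Matrix.one_apply_eq, mul_one]
  rfl

lemma rmap_prodCongr (e₁ : ι ≃ μ) (e₂ : κ ≃ ν) (P : Submodule ℝ (Matrix ι ι ℂ))
    (Q : Submodule ℝ (Matrix κ κ ℂ)) :
    rmap (Equiv.prodCongr e₁ e₂) (tensorSub P Q) = tensorSub (rmap e₁ P) (rmap e₂ Q) := by
  apply le_antisymm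
  · rw [rmap, Submodule.map_le_iff_le_comap]
    intro M hM
    refine tensorSub_induction (p := fun M => M ∈ Submodule.comap _ _) hM ?_ ?_ ?_ ?_
    · intro A hA B hB
      simp only [Submodule.mem_comap, LinearEquiv.coe_coe]
      rw [reindex_kron_prodCongr]
      exact mem_tensorSub ⟨A, hA, rfl⟩ ⟨B, hB, rfl⟩
    · exact Submodule.zero_mem _
    · exact fun u v hu hv => Submodule.add_mem _ hu hv
    · exact fun c u hu => Submodule.smul_mem _ c hu
  · refine tensorSub_le.mpr ?_
    rintro _ ⟨A, hA, rfl⟩ _ ⟨B, hB, rfl⟩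
    exact ⟨A ⊗ₖ B, mem_tensorSub hA hB, reindex_kron_prodCongr e₁ e₂ A B⟩

lemma rmap_prodComm (P : Submodule ℝ (Matrix ι ι ℂ)) (Q : Submodule ℝ (Matrix κ κ ℂ)) :
    rmap (Equiv.prodComm ι κ) (tensorSub P Q) = tensorSub Q P := by
  apply le_antisymm
  · rw [rmap, Submodule.map_le_iff_le_comap]
    intro M hM
    refine tensorSub_induction (p := fun M => M ∈ Submodule.comap _ _) hM ?_ ?_ ?_ ?_
    · intro A hA B hB
      simp only [Submodule.mem_comap, LinearEquiv.coe_coe]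
      rw [reindex_kron_comm]
      exact mem_tensorSub hB hA
    · exact Submodule.zero_mem _
    · exact fun u v hu hv => Submodule.add_mem _ hu hv
    · exact fun c u hu => Submodule.smul_mem _ c hu
  · refine tensorSub_le.mpr ?_
    intro B hB A hA
    exact ⟨A ⊗ₖ B, mem_tensorSub hA hB, reindex_kron_comm A B⟩

lemma rmap_prodAssoc (P : Submodule ℝ (Matrix ι ι ℂ)) (Q : Submodule ℝ (Matrix κ κ ℂ))
    (R : Submodule ℝ (Matrix μ μ ℂ)) :
    rmap (Equiv.prodAssoc ι κ μ) (tensorSub (tensorSub P Q) R) =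
      tensorSub P (tensorSub Q R) := by
  apply le_antisymm
  · rw [rmap, Submodule.map_le_iff_le_comap]
    refine tensorSub_le.mpr ?_
    intro X hX C hC
    refine tensorSub_induction
      (p := fun X => X ⊗ₖ C ∈ Submodule.comap
        (Matrix.reindexLinearEquiv ℝ ℂ (Equiv.prodAssoc ι κ μ)
          (Equiv.prodAssoc ι κ μ)).toLinearMap (tensorSub P (tensorSub Q R))) hX ?_ ?_ ?_ ?_
    · intro A hA B hB
      simp only [Submodule.mem_comap, LinearEquiv.coe_coe]
      rw [reindex_kron_assoc]
      exact mem_tensorSub hA (mem_tensorSub hB hC)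
    · rw [Matrix.zero_kronecker]
      exact Submodule.zero_mem _
    · intro u v hu hv
      rw [Matrix.add_kronecker]
      exact Submodule.add_mem _ hu hv
    · intro c u hu
      rw [Matrix.smul_kronecker]
      exact Submodule.smul_mem _ c hu
  · refine tensorSub_le.mpr ?_
    intro A hA Y hY
    refine tensorSub_induction
      (p := fun Y => A ⊗ₖ Y ∈ rmap (Equiv.prodAssoc ι κ μ) (tensorSub (tensorSub P Q) R))
      hY ?_ ?_ ?_ ?_
    · intro B hB C hC
      exact ⟨(A ⊗ₖ B) ⊗ₖ C, mem_tensorSub (mem_tensorSub hA hB) hC,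
        reindex_kron_assoc A B C⟩
    · rw [Matrix.kronecker_zero]
      exact Submodule.zero_mem _
    · intro u v hu hv
      rw [Matrix.kronecker_add]
      exact Submodule.add_mem _ hu hv
    · intro c u hu
      rw [Matrix.kronecker_smul]
      exact Submodule.smul_mem _ c hu

lemma rmap_prodUnique {υ : Type} [Fintype υ] [DecidableEq υ] [Unique υ]
    (P : Submodule ℝ (Matrix ι ι ℂ)) :
    rmap (Equiv.prodUnique ι υ).symm P = tensorSub P (idSub υ) := by
  apply le_antisymm
  · rintro _ ⟨A, hA, rfl⟩
    show Matrix.reindexLinearEquiv ℝ ℂ _ _ A ∈ _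
    rw [reindex_kron_one]
    exact mem_tensorSub hA one_mem_idSub
  · refine tensorSub_le.mpr fun A hA B hB => ?_
    obtain ⟨c, rfl⟩ := mem_idSub.mp hB
    rw [Matrix.kronecker_smul, ← reindex_kron_one]
    exact Submodule.smul_mem _ c ⟨A, hA, rfl⟩

lemma rmap_prodAssoc_symm (P : Submodule ℝ (Matrix ι ι ℂ)) (Q : Submodule ℝ (Matrix κ κ ℂ))
    (R : Submodule ℝ (Matrix μ μ ℂ)) :
    rmap (Equiv.prodAssoc ι κ μ).symm (tensorSub P (tensorSub Q R)) =
      tensorSub (tensorSub P Q) R := by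
  rw [← rmap_prodAssoc P Q R, rmap_rmap, Equiv.self_trans_symm, rmap_refl]

end Aux

/-! #### The structure of `Delta` on tensor types -/

section QTAux

open Matrix Kronecker

instance : Unique (Idx (QT.elem 1)) := inferInstanceAs (Unique (Fin 1))

/-- The orthogonal complement of `Δ_x` inside the traceless Hermitian operators. -/
noncomputable def Dbar (x : QT) : Submodule ℝ (Matrix (Idx x) (Idx x) ℂ) :=
  perpWithin (Delta x) (tlHermSub (Idx x))

/-- `Δ_x` together with the identity. -/
noncomputable def Efam (x : QT) : Submodule ℝ (Matrix (Idx x) (Idx x) ℂ) :=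
  idSub (Idx x) ⊔ Delta x

lemma delta_le_tl : ∀ x : QT, Delta x ≤ tlHermSub (Idx x)
  | .elem _ => le_rfl
  | .arrow x y => by
      show tensorSub (hermSub (Idx x)) (Delta y) ⊔
        tensorSub (perpWithin (Delta x) (tlHermSub (Idx x)))
          (perpWithin (Delta y) (hermSub (Idx y))) ≤ _
      apply sup_le
      · exact tensorSub_le_tl_right le_rfl (delta_le_tl y)
      · exact tensorSub_le_tl_left perpWithin_le perpWithin_le

lemma delta_le_herm (x : QT) : Delta x ≤ hermSub (Idx x) :=
  (delta_le_tl x).trans tl_le_herm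

lemma dbar_le_tl (x : QT) : Dbar x ≤ tlHermSub (Idx x) := perpWithin_le

lemma efam_le_herm (x : QT) : Efam x ≤ hermSub (Idx x) :=
  sup_le idSub_le_herm (delta_le_herm x)

lemma tl_eq (x : QT) : tlHermSub (Idx x) = Delta x ⊔ Dbar x :=
  le_antisymm (le_sup_perpWithin (delta_le_tl x) tl_le_herm)
    (sup_le (delta_le_tl x) perpWithin_le)

lemma herm_eq (x : QT) : hermSub (Idx x) = Dbar x ⊔ Efam x := by
  rw [herm_decomp', tl_eq x, Efam, ← sup_assoc, sup_comm (idSub (Idx x) ⊔ Delta x) (Dbar x)]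

lemma orth_dbar_delta (x : QT) : OrthP (Dbar x) (Delta x) := fun Y hY Z hZ => by
  rw [Matrix.trace_mul_comm]; exact hY.2 Z hZ

lemma orth_dbar_id (x : QT) : OrthP (Dbar x) (idSub (Idx x)) := by
  intro Y hY Z hZ
  obtain ⟨c, rfl⟩ := mem_idSub.mp hZ
  rw [Matrix.mul_smul, mul_one, Matrix.trace_smul, hY.1.2, smul_zero]

lemma orth_dbar_efam (x : QT) : OrthP (Dbar x) (Efam x) :=
  orthP_sup_right (orth_dbar_id x) (orth_dbar_delta x)

lemma delta_I : Delta (QT.elem 1) = (⊥ : Submodule ℝ (Matrix (Idx (QT.elem 1)) (Idx (QT.elem 1)) ℂ)) :=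
  tl_unique_bot

lemma herm_I : hermSub (Idx (QT.elem 1)) = idSub (Idx (QT.elem 1)) := herm_unique_eq

lemma delta_arrow_I (w : QT) :
    Delta (QT.arrow w (QT.elem 1)) = tensorSub (Dbar w) (idSub (Idx (QT.elem 1))) := by
  have h : Delta (QT.arrow w (QT.elem 1)) = tensorSub (hermSub (Idx w)) (Delta (QT.elem 1)) ⊔
      tensorSub (perpWithin (Delta w) (tlHermSub (Idx w)))
        (perpWithin (Delta (QT.elem 1)) (hermSub (Idx (QT.elem 1)))) := rfl
  rw [h, delta_I, tensorSub_bot_right, perpWithin_bot, herm_I, bot_sup_eq]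
  rfl

lemma theta_eq (y : QT) :
    perpWithin (Delta (QT.arrow y (QT.elem 1))) (hermSub (Idx (QT.arrow y (QT.elem 1)))) =
      tensorSub (Efam y) (idSub (Idx (QT.elem 1))) := by
  rw [delta_arrow_I]
  apply perpWithin_eq_of
  · exact tensorSub_le_herm ((dbar_le_tl y).trans tl_le_herm) idSub_le_herm
  · exact tensorSub_le_herm (efam_le_herm y) idSub_le_herm
  · refine le_trans herm_le_tensor_herm ?_
    rw [herm_eq y, herm_I, tensorSub_sup_left]
    exact le_rfl
  · exact tensorSub_orth_left (orth_dbar_efam y)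

lemma dbar_arrow (x y : QT) :
    Dbar (QT.arrow x (QT.arrow y (QT.elem 1))) =
      tensorSub (idSub (Idx x)) (tensorSub (Delta y) (idSub (Idx (QT.elem 1)))) ⊔
        tensorSub (Delta x) (tensorSub (Efam y) (idSub (Idx (QT.elem 1)))) := by
  have hD : Delta (QT.arrow x (QT.arrow y (QT.elem 1))) =
      tensorSub (hermSub (Idx x)) (tensorSub (Dbar y) (idSub (Idx (QT.elem 1)))) ⊔
        tensorSub (Dbar x) (tensorSub (Efam y) (idSub (Idx (QT.elem 1)))) := by
    have h0 : Delta (QT.arrow x (QT.arrow y (QT.elem 1))) =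
        tensorSub (hermSub (Idx x)) (Delta (QT.arrow y (QT.elem 1))) ⊔
          tensorSub (perpWithin (Delta x) (tlHermSub (Idx x)))
            (perpWithin (Delta (QT.arrow y (QT.elem 1)))
              (hermSub (Idx (QT.arrow y (QT.elem 1))))) := rfl
    rw [h0, theta_eq, delta_arrow_I]
    rfl
  show perpWithin _ _ = _
  rw [hD]
  have hDvtl : tensorSub (Dbar y) (idSub (Idx (QT.elem 1))) ≤
      tlHermSub (Idx y × Idx (QT.elem 1)) :=
    tensorSub_le_tl_left (dbar_le_tl y) idSub_le_herm
  have hGherm : tensorSub (Efam y) (idSub (Idx (QT.elem 1))) ≤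
      hermSub (Idx y × Idx (QT.elem 1)) :=
    tensorSub_le_herm (efam_le_herm y) idSub_le_herm
  apply perpWithin_eq_of
  · apply sup_le
    · exact tensorSub_le_herm le_rfl (hDvtl.trans tl_le_herm)
    · exact tensorSub_le_herm ((dbar_le_tl x).trans tl_le_herm) hGherm
  · apply sup_le
    · exact tensorSub_le_tl_right idSub_le_herm
        (tensorSub_le_tl_left (delta_le_tl y) idSub_le_herm)
    · exact tensorSub_le_tl_left (delta_le_tl x) hGherm
  · -- spanning
    apply tl_le_of
    · apply sup_le
      · apply sup_le
        · exact tensorSub_le_tl_right le_rfl hDvtl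
        · exact tensorSub_le_tl_left (dbar_le_tl x) hGherm
      · apply sup_le
        · exact tensorSub_le_tl_right idSub_le_herm
            (tensorSub_le_tl_left (delta_le_tl y) idSub_le_herm)
        · exact tensorSub_le_tl_left (delta_le_tl x) hGherm
    · -- hermSub ≤ S ⊔ T ⊔ idSub
      have h1 : hermSub (Idx (QT.arrow y (QT.elem 1))) ≤
          tensorSub (Dbar y) (idSub (Idx (QT.elem 1))) ⊔
            tensorSub (Efam y) (idSub (Idx (QT.elem 1))) := by
        refine le_trans herm_le_tensor_herm ?_
        rw [herm_eq y, herm_I, tensorSub_sup_left]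
        exact le_rfl
      have h2 : hermSub (Idx (QT.arrow x (QT.arrow y (QT.elem 1)))) ≤
          tensorSub (hermSub (Idx x))
            (tensorSub (Dbar y) (idSub (Idx (QT.elem 1))) ⊔
              tensorSub (Efam y) (idSub (Idx (QT.elem 1)))) :=
        le_trans herm_le_tensor_herm (tensorSub_mono le_rfl h1)
      refine le_trans h2 ?_
      rw [tensorSub_sup_right]
      apply sup_le
      · -- hermSub x ⊗ Dv ≤ S-block 1
        exact le_sup_of_le_left (le_sup_of_le_left le_sup_left)
      · -- hermSub x ⊗ G
        rw [herm_eq x, tensorSub_sup_left]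
        apply sup_le
        · -- Dbar x ⊗ G ≤ S-block 2
          exact le_sup_of_le_left (le_sup_of_le_left le_sup_right)
        · -- Efam x ⊗ G
          rw [show Efam x = idSub (Idx x) ⊔ Delta x from rfl, tensorSub_sup_left]
          apply sup_le
          · -- idSub x ⊗ G
            rw [show Efam y = idSub (Idx y) ⊔ Delta y from rfl, tensorSub_sup_left,
              tensorSub_sup_right]
            apply sup_le
            · -- idSub x ⊗ (idSub y ⊗ idSub) ≤ idSub
              refine le_sup_of_le_right (le_of_eq ?_)
              rw [tensor_id, tensor_id]
              rfl
            · -- idSub x ⊗ (Delta y ⊗ idSub) ≤ T-block 1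
              exact le_sup_of_le_left (le_sup_of_le_right le_sup_left)
          · -- Delta x ⊗ G ≤ T-block 2
            exact le_sup_of_le_left (le_sup_of_le_right le_sup_right)
  · -- orthogonality
    apply orthP_sup_left
    · apply orthP_sup_right
      · exact tensorSub_orth_right (tensorSub_orth_left (orth_dbar_delta y))
      · exact tensorSub_orth_right (tensorSub_orth_left (orth_dbar_efam y))
    · apply orthP_sup_right
      · exact tensorSub_orth_left (orth_dbar_id x)
      · exact tensorSub_orth_left (orth_dbar_delta x)

lemma delta_tens (x y : QT) :
    Delta (tens x y) =
      tensorSub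
        (tensorSub (idSub (Idx x)) (tensorSub (Delta y) (idSub (Idx (QT.elem 1)))) ⊔
          tensorSub (Delta x) (tensorSub (Efam y) (idSub (Idx (QT.elem 1)))))
        (idSub (Idx (QT.elem 1))) := by
  have h : Delta (tens x y) =
      Delta (QT.arrow (QT.arrow x (QT.arrow y (QT.elem 1))) (QT.elem 1)) := rfl
  rw [h, delta_arrow_I, dbar_arrow]
  rfl

lemma efam_tens (x y : QT) :
    Efam (tens x y) =
      tensorSub (tensorSub (Efam x) (tensorSub (Efam y) (idSub (Idx (QT.elem 1)))))
        (idSub (Idx (QT.elem 1))) := by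
  rw [Efam, delta_tens]
  have hid : idSub (Idx (tens x y)) =
      tensorSub (tensorSub (idSub (Idx x)) (tensorSub (idSub (Idx y)) (idSub (Idx (QT.elem 1)))))
        (idSub (Idx (QT.elem 1))) := by
    rw [tensor_id, tensor_id, tensor_id]
    rfl
  rw [hid]
  erw [← tensorSub_sup_left]
  congr 1
  rw [show Efam x = idSub (Idx x) ⊔ Delta x from rfl, tensorSub_sup_left]
  rw [show Efam y = idSub (Idx y) ⊔ Delta y from rfl, tensorSub_sup_left, tensorSub_sup_right]
  rw [← sup_assoc, tensorSub_sup_right]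

lemma delta_eq_efam_inf (z : QT) : Delta z = Efam z ⊓ tlHermSub (Idx z) :=
  (efam_inf_tl (delta_le_tl z)).symm

lemma efam_tens_rmap (x y : QT) :
    Efam (tens x y) = rmap (etens x y).symm (tensorSub (Efam x) (Efam y)) := by
  have h2 : rmap (etens x y).symm (tensorSub (Efam x) (Efam y)) =
      rmap (Equiv.prodUnique (Idx x × (Idx y × Fin 1)) (Fin 1)).symm
        (rmap (Equiv.prodCongr (Equiv.refl (Idx x)) (Equiv.prodUnique (Idx y) (Fin 1))).symm
          (tensorSub (Efam x) (Efam y))) := by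
    rw [rmap_rmap]
    rfl
  rw [h2, Equiv.prodCongr_symm, Equiv.refl_symm, rmap_prodCongr, rmap_refl, rmap_prodUnique,
    rmap_prodUnique]
  exact efam_tens x y

lemma card_arrow (a b : QT) :
    Fintype.card (Idx (QT.arrow a b)) = Fintype.card (Idx a) * Fintype.card (Idx b) :=
  (Fintype.card_congr (Equiv.refl _)).trans (Fintype.card_prod _ _)

lemma card_I : Fintype.card (Idx (QT.elem 1)) = 1 := rfl

end QTAux


set_option maxHeartbeats 2000000 in
/-- The tensor product of types is commutative and associative up to type
equivalence: `x ⊗ y ≡ y ⊗ x` and `(x ⊗ y) ⊗ z ≡ x ⊗ (y ⊗ z)`, i.e. the pairs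
`(λ, Δ)` coincide up to the canonical reordering of tensor factors. -/
theorem tens_comm_assoc (x y z : QT) :
    lam (tens x y) = lam (tens y x) ∧
    lam (tens (tens x y) z) = lam (tens x (tens y z)) ∧
    Delta (tens x y) =
      Submodule.map
        (Matrix.reindexLinearEquiv ℝ ℂ
          ((etens y x).trans ((Equiv.prodComm (Idx y) (Idx x)).trans (etens x y).symm))
          ((etens y x).trans ((Equiv.prodComm (Idx y) (Idx x)).trans (etens x y).symm))).toLinearMap
        (Delta (tens y x)) ∧
    Delta (tens (tens x y) z) =
      Submodule.map
        (Matrix.reindexLinearEquiv ℝ ℂ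
          ((etens x (tens y z)).trans
            (((Equiv.prodCongr (Equiv.refl (Idx x)) (etens y z)).trans
              (Equiv.prodAssoc (Idx x) (Idx y) (Idx z)).symm).trans
              ((Equiv.prodCongr (etens x y).symm (Equiv.refl (Idx z))).trans
                (etens (tens x y) z).symm)))
          ((etens x (tens y z)).trans
            (((Equiv.prodCongr (Equiv.refl (Idx x)) (etens y z)).trans
              (Equiv.prodAssoc (Idx x) (Idx y) (Idx z)).symm).trans
              ((Equiv.prodCongr (etens x y).symm (Equiv.refl (Idx z))).trans
                (etens (tens x y) z).symm)))).toLinearMap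
        (Delta (tens x (tens y z))) := by
  refine ⟨?_, ?_, ?_, ?_⟩
  · simp only [tens, lam, card_arrow, card_I, Nat.cast_mul, Nat.cast_one]
    ring
  · simp only [tens, lam, card_arrow, card_I, Nat.cast_mul, Nat.cast_one]
    rcases eq_or_ne ((Fintype.card (Idx x) : ℝ)) 0 with hx | hx
    · simp [hx]
    rcases eq_or_ne ((Fintype.card (Idx y) : ℝ)) 0 with hy | hy
    · simp [hy]
    rcases eq_or_ne ((Fintype.card (Idx z) : ℝ)) 0 with hz | hz
    · simp [hz]
    field_simp
  · show Delta (tens x y) = rmap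
      ((etens y x).trans ((Equiv.prodComm (Idx y) (Idx x)).trans (etens x y).symm))
      (Delta (tens y x))
    rw [delta_eq_efam_inf (tens y x), rmap_inf, rmap_tl, delta_eq_efam_inf (tens x y)]
    congr 1
    rw [efam_tens_rmap y x, rmap_rmap, efam_tens_rmap x y]
    have hE : ((etens y x).symm.trans ((etens y x).trans
        ((Equiv.prodComm (Idx y) (Idx x)).trans (etens x y).symm))) =
        (Equiv.prodComm (Idx y) (Idx x)).trans (etens x y).symm := by
      rw [← Equiv.trans_assoc, Equiv.symm_trans_self, Equiv.refl_trans]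
    rw [hE, ← rmap_rmap, rmap_prodComm]
  · show Delta (tens (tens x y) z) = rmap
      ((etens x (tens y z)).trans
        (((Equiv.prodCongr (Equiv.refl (Idx x)) (etens y z)).trans
          (Equiv.prodAssoc (Idx x) (Idx y) (Idx z)).symm).trans
          ((Equiv.prodCongr (etens x y).symm (Equiv.refl (Idx z))).trans
            (etens (tens x y) z).symm)))
      (Delta (tens x (tens y z)))
    rw [delta_eq_efam_inf (tens x (tens y z)), rmap_inf, rmap_tl,
      delta_eq_efam_inf (tens (tens x y) z)]
    congr 1
    rw [efam_tens_rmap x (tens y z), rmap_rmap]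
    have hE : ((etens x (tens y z)).symm.trans ((etens x (tens y z)).trans
        (((Equiv.prodCongr (Equiv.refl (Idx x)) (etens y z)).trans
          (Equiv.prodAssoc (Idx x) (Idx y) (Idx z)).symm).trans
          ((Equiv.prodCongr (etens x y).symm (Equiv.refl (Idx z))).trans
            (etens (tens x y) z).symm)))) =
        ((Equiv.prodCongr (Equiv.refl (Idx x)) (etens y z)).trans
          (Equiv.prodAssoc (Idx x) (Idx y) (Idx z)).symm).trans
          ((Equiv.prodCongr (etens x y).symm (Equiv.refl (Idx z))).trans
            (etens (tens x y) z).symm) := by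
      rw [← Equiv.trans_assoc, Equiv.symm_trans_self, Equiv.refl_trans]
    rw [hE, ← rmap_rmap, ← rmap_rmap, ← rmap_rmap]
    rw [rmap_prodCongr, rmap_refl, efam_tens_rmap y z, rmap_cancel]
    rw [rmap_prodAssoc_symm]
    rw [rmap_prodCongr, rmap_refl, ← efam_tens_rmap x y]
    rw [← efam_tens_rmap (tens x y) z]
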